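/- Let q be a real number with q ≠ 0 and q ≠ 1, let N ≥ 1, M ≥ 0 and l ≥ 1, and let φ_1, …, φ_N : ℝ → ℝ with W_N^q(φ_1, …, φ_N)(x) ≠ 0 for all x ≠ 0. Fix indices 1 ≤ i_1 < i_2 < ⋯ < i_{M+1} ≤ N. Then the following are equivalent: (a) W_{N+M+1}^q(φ_1, …, φ_N, ∂_q^l φ_{i_1}, …, ∂_q^l φ_{i_{M+1}})(x) = 0 for all x ≠ 0; (b) W_{M+1}^q(ρ_{i_1}, …, ρ_{i_{M+1}})(x) = 0 for all x ≠ 0, where ρ_i = W_{N+1}^q(φ_1, …, φ_N, ∂_q^l φ_i)/W_N^q(φ_1, …, φ_N). -/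

import Mathlib

/-- The `q`-derivative: `(∂_q f)(x) = (f(qx) − f(x))/(x(q−1))` (zero at `x = 0`). -/
noncomputable def qDeriv (q : ℝ) (f : ℝ → ℝ) : ℝ → ℝ :=
  fun x => (f (q * x) - f x) / (x * (q - 1))

/-- The q-Wronskian `W_n^q(f_1,…,f_n)(x) = det((∂_q^{i−1} f_j)(x))`. -/
noncomputable def qWronskian (q : ℝ) (n : ℕ) (f : Fin n → ℝ → ℝ) (x : ℝ) : ℝ :=
  Matrix.det (Matrix.of fun i j : Fin n => (qDeriv q)^[(i : ℕ)] (f j) x)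

/-- Coefficients expressing iterated q-derivatives in terms of shifted values. -/
noncomputable def Tc (q : ℝ) : ℕ → ℕ → ℝ → ℝ
  | 0, 0, _ => 1
  | 0, _+1, _ => 0
  | i+1, 0, x => (0 - Tc q i 0 x) / (x * (q - 1))
  | i+1, j+1, x => (Tc q i j (q * x) - Tc q i (j+1) x) / (x * (q - 1))

lemma Tc_zero_of_lt (q : ℝ) : ∀ i j : ℕ, i < j → ∀ x, Tc q i j x = 0 := by
  intro i
  induction i with
  | zero => intro j hj x; match j, hj with | (j+1), _ => rfl
  | succ i ih =>
    intro j hj x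
    match j, hj with
    | (j+1), hj =>
      show (Tc q i j (q*x) - Tc q i (j+1) x) / (x * (q-1)) = 0
      rw [ih j (by omega), ih (j+1) (by omega)]
      simp

lemma Tc_expand (q : ℝ) (hq0 : q ≠ 0) :
    ∀ (i : ℕ) (f : ℝ → ℝ) (x : ℝ), x ≠ 0 →
      (qDeriv q)^[i] f x = ∑ j ∈ Finset.range (i+1), Tc q i j x * f (q^j * x) := by
  intro i
  induction i with
  | zero => intro f x hx; simp [Tc]
  | succ i ih =>
    intro f x hx
    rw [Function.iterate_succ_apply' (qDeriv q)]
    have hqx : q * x ≠ 0 := mul_ne_zero hq0 hx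
    show ((qDeriv q)^[i] f (q*x) - (qDeriv q)^[i] f x) / (x * (q-1)) = _
    rw [ih f (q*x) hqx, ih f x hx]
    have h1 : ∑ j ∈ Finset.range (i+1), Tc q i j (q*x) * f (q^j * (q*x))
        = ∑ j ∈ Finset.range (i+1), Tc q i j (q*x) * f (q^(j+1) * x) := by
      apply Finset.sum_congr rfl; intro j _; ring_nf
    rw [h1]
    rw [Finset.sum_range_succ' (fun j => Tc q (i+1) j x * f (q^j * x)) (i+1)]
    have h2 : ∀ j ∈ Finset.range (i+1),
        Tc q (i+1) (j+1) x * f (q^(j+1) * x)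
        = (Tc q i j (q*x) * f (q^(j+1)*x) - Tc q i (j+1) x * f (q^(j+1)*x)) / (x*(q-1)) := by
      intro j _
      show (Tc q i j (q*x) - Tc q i (j+1) x) / (x*(q-1)) * f (q^(j+1)*x) = _
      ring
    rw [Finset.sum_congr rfl h2]
    have h3 : Tc q (i+1) 0 x * f (q^0 * x) = (0 - Tc q i 0 x * f (q^0*x)) / (x*(q-1)) := by
      show (0 - Tc q i 0 x) / (x*(q-1)) * f (q^0*x) = _
      ring
    rw [h3, ← Finset.sum_div, ← add_div]
    congr 1
    rw [Finset.sum_sub_distrib]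
    have h4 : ∑ j ∈ Finset.range (i+1), Tc q i (j+1) x * f (q^(j+1) * x)
        = ∑ j ∈ Finset.range (i+1), Tc q i j x * f (q^j * x) - Tc q i 0 x * f (q^0 * x) := by
      rw [Finset.sum_range_succ' (fun j => Tc q i j x * f (q^j * x)) i]
      have : Tc q i (i+1) x = 0 := Tc_zero_of_lt q i (i+1) (by omega) x
      rw [Finset.sum_range_succ, this]
      ring
    rw [h4]
    ring

lemma Tc_diag_ne_zero (q : ℝ) (hq0 : q ≠ 0) (hq1 : q ≠ 1) :
    ∀ (i : ℕ) (x : ℝ), x ≠ 0 → Tc q i i x ≠ 0 := by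
  intro i
  induction i with
  | zero => intro x hx; norm_num [Tc]
  | succ i ih =>
    intro x hx
    show (Tc q i i (q*x) - Tc q i (i+1) x) / (x * (q-1)) ≠ 0
    rw [Tc_zero_of_lt q i (i+1) (by omega) x, sub_zero]
    exact div_ne_zero (ih (q*x) (mul_ne_zero hq0 hx))
      (mul_ne_zero hx (sub_ne_zero.mpr hq1))

/-- The Casoratian: determinant of shifted values on the geometric grid. -/
noncomputable def cas (q : ℝ) (n : ℕ) (f : Fin n → ℝ → ℝ) (x : ℝ) : ℝ :=
  Matrix.det (Matrix.of fun i j : Fin n => f j (q^(i : ℕ) * x))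

lemma qWronskian_eq_cas (q : ℝ) (hq0 : q ≠ 0) (n : ℕ) (f : Fin n → ℝ → ℝ)
    (x : ℝ) (hx : x ≠ 0) :
    qWronskian q n f x = (∏ i : Fin n, Tc q i i x) * cas q n f x := by
  have key : (Matrix.of fun i j : Fin n => (qDeriv q)^[(i : ℕ)] (f j) x)
      = (Matrix.of fun i k : Fin n => Tc q i k x) *
        (Matrix.of fun k j : Fin n => f j (q^(k : ℕ) * x)) := by
    ext i j
    show (qDeriv q)^[(i:ℕ)] (f j) x = ∑ k : Fin n, Tc q i k x * f j (q^(k:ℕ) * x)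
    rw [Tc_expand q hq0 (i:ℕ) (f j) x hx]
    rw [Fin.sum_univ_eq_sum_range (fun k => Tc q i k x * f j (q^k * x)) n]
    apply Finset.sum_subset
    · intro a ha
      simp only [Finset.mem_range] at ha ⊢
      omega
    · intro a _ ha
      simp only [Finset.mem_range, not_lt] at ha
      rw [Tc_zero_of_lt q (i:ℕ) a (by omega) x, zero_mul]
  have hdetT : (Matrix.of fun i k : Fin n => Tc q i k x).det = ∏ i : Fin n, Tc q i i x := by
    apply Matrix.det_of_lowerTriangular
    intro i k hik
    exact Tc_zero_of_lt q i k hik x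
  rw [qWronskian, key, Matrix.det_mul, hdetT, cas]

lemma Tc_prod_ne_zero (q : ℝ) (hq0 : q ≠ 0) (hq1 : q ≠ 1) (n : ℕ) (x : ℝ) (hx : x ≠ 0) :
    (∏ i : Fin n, Tc q i i x) ≠ 0 :=
  Finset.prod_ne_zero_iff.mpr fun i _ => Tc_diag_ne_zero q hq0 hq1 i x hx

lemma cas_ne_zero_of_qW (q : ℝ) (hq0 : q ≠ 0) (n : ℕ) (f : Fin n → ℝ → ℝ)
    (x : ℝ) (hx : x ≠ 0) (h : qWronskian q n f x ≠ 0) : cas q n f x ≠ 0 := by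
  rw [qWronskian_eq_cas q hq0 n f x hx] at h
  exact right_ne_zero_of_mul h


/-- `N×N` minor: rows `i..i+N-1`, the `φ` columns. -/
noncomputable def ddet (N : ℕ) (φ : Fin N → ℕ → ℝ) (i : ℕ) : ℝ :=
  Matrix.det (Matrix.of fun r j : Fin N => φ j (i + r))

/-- `(N+1)×(N+1)` minor: rows `i..i+N`, the `φ` columns plus one extra column `g`. -/
noncomputable def mdet (N : ℕ) (φ : Fin N → ℕ → ℝ) (g : ℕ → ℝ) (i : ℕ) : ℝ :=
  Matrix.det (Matrix.of fun r j : Fin (N+1) =>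
    (Fin.snoc (fun j' : Fin N => φ j' (i + r)) (g (i + r)) : Fin (N+1) → ℝ) j)

noncomputable def bigdet (N M : ℕ) (φ : Fin N → ℕ → ℝ) (ψ : Fin M → ℕ → ℝ) : ℝ :=
  Matrix.det (Matrix.of fun r c : Fin (N+M) =>
    Fin.append (fun j : Fin N => φ j (r : ℕ)) (fun k : Fin M => ψ k (r : ℕ)) c)

/-- Subtracting a combination of the `φ` columns from the extra column doesn't change `mdet`. -/
lemma mdet_sub (N : ℕ) (φ : Fin N → ℕ → ℝ) (g : ℕ → ℝ) (c : Fin N → ℝ) (i : ℕ) :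
    mdet N φ (fun r => g r - ∑ j : Fin N, c j * φ j r) i = mdet N φ g i := by
  set M : Matrix (Fin (N+1)) (Fin (N+1)) ℝ := Matrix.of fun r j : Fin (N+1) =>
    (Fin.snoc (fun j' : Fin N => φ j' (i + r)) (g (i + r)) : Fin (N+1) → ℝ) j with hM
  set V : Matrix (Fin (N+1)) (Fin (N+1)) ℝ := Matrix.of fun a b : Fin (N+1) =>
    if b = Fin.last N then (Fin.snoc (fun j : Fin N => -(c j)) 1 : Fin (N+1) → ℝ) a
    else if a = b then 1 else 0 with hV
  have hMV : (Matrix.of fun r j : Fin (N+1) =>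
      (Fin.snoc (fun j' : Fin N => φ j' (i + r))
        (g (i + r) - ∑ j : Fin N, c j * φ j (i + r)) : Fin (N+1) → ℝ) j) = M * V := by
    ext r b
    rw [Matrix.mul_apply]
    by_cases hb : b = Fin.last N
    · subst hb
      have hVl : ∀ a, V a (Fin.last N)
          = (Fin.snoc (fun j : Fin N => -(c j)) 1 : Fin (N+1) → ℝ) a := by
        intro a; simp [hV]
      rw [Finset.sum_congr rfl (fun a _ => by rw [hVl a] :
        ∀ a ∈ Finset.univ, M r a * V a (Fin.last N)
          = M r a * (Fin.snoc (fun j : Fin N => -(c j)) 1 : Fin (N+1) → ℝ) a)]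
      rw [Fin.sum_univ_castSucc]
      simp only [Fin.snoc_castSucc, Fin.snoc_last, hM, Matrix.of_apply]
      have h5 : ∀ a : Fin N, φ a (i + (r:ℕ)) * (-(c a)) = -(c a * φ a (i + (r:ℕ))) :=
        fun a => by ring
      rw [Finset.sum_congr rfl (fun a _ => h5 a), Finset.sum_neg_distrib]
      ring
    · have hVb : ∀ a, V a b = if a = b then 1 else 0 := by
        intro a; simp [hV, if_neg hb]
      rw [Finset.sum_congr rfl (fun a _ => by rw [hVb a, mul_ite, mul_one, mul_zero] :
        ∀ a ∈ Finset.univ, M r a * V a b = if a = b then M r a else 0)]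
      rw [Finset.sum_ite_eq' Finset.univ b (fun a => M r a), if_pos (Finset.mem_univ b)]
      obtain ⟨b', rfl⟩ := Fin.exists_castSucc_eq.mpr hb
      simp [hM]
  have hdetV : V.det = 1 := by
    have ht : V.BlockTriangular id := by
      intro a b hab
      have hb : b ≠ Fin.last N := by
        intro h; subst h
        exact absurd (Fin.le_last a) (not_le.mpr hab)
      have hab' : ¬(a = b) := fun h => absurd hab (h ▸ lt_irrefl _)
      simp only [hV, Matrix.of_apply, if_neg hb, if_neg hab']
    rw [Matrix.det_of_upperTriangular ht]
    apply Finset.prod_eq_one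
    intro a _
    by_cases ha : a = Fin.last N
    · subst ha; simp [hV]
    · simp [hV, if_neg ha]
  rw [mdet, mdet, hMV, Matrix.det_mul, hdetV, hM, mul_one]

lemma succAbove_val (n : ℕ) (r : Fin (n+1)) (a : Fin n) :
    ((r.succAbove a : Fin (n+1)) : ℕ) = if (a:ℕ) < (r:ℕ) then (a:ℕ) else (a:ℕ)+1 := by
  rcases lt_or_ge a.castSucc r with h | h
  · rw [Fin.succAbove, if_pos h, if_pos (by simpa [Fin.lt_def] using h), Fin.coe_castSucc]
  · rw [Fin.succAbove, if_neg (not_lt.mpr h),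
      if_neg (not_lt.mpr (by simpa [Fin.le_def] using h)), Fin.val_succ]

lemma mdet_factor (N M : ℕ) (φ : Fin N → ℕ → ℝ) (ψ : Fin (M+1) → ℕ → ℝ)
    (hψ0 : ∀ k (r : ℕ), r < N → ψ k r = 0) :
    (Matrix.of fun i k : Fin (M+1) => mdet N φ (ψ k) (i : ℕ)).det
      = (∏ i : Fin (M+1), ddet N φ (i : ℕ)) *
        (Matrix.of fun t k : Fin (M+1) => ψ k (N + (t : ℕ))).det := by
  set Fn : ℕ → ℕ → ℝ := fun i v => (-1 : ℝ)^(v + N) *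
    (Matrix.of fun a b : Fin N =>
      φ b (i + (if (a:ℕ) < v then (a:ℕ) else (a:ℕ)+1))).det with hFn
  set E : Matrix (Fin (M+1)) (Fin (M+1)) ℝ := Matrix.of fun i s =>
    if (s:ℕ) ≤ (i:ℕ) ∧ (i:ℕ) ≤ N + (s:ℕ) then Fn (i:ℕ) (N + (s:ℕ) - (i:ℕ)) else 0 with hE
  have key : (Matrix.of fun i k : Fin (M+1) => mdet N φ (ψ k) (i : ℕ))
      = E * (Matrix.of fun t k : Fin (M+1) => ψ k (N + (t : ℕ))) := by
    ext i k
    rw [Matrix.mul_apply, Matrix.of_apply, mdet, Matrix.det_succ_column _ (Fin.last N)]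
    have hL : ∀ r : Fin (N+1),
        (-1 : ℝ)^((r:ℕ) + ((Fin.last N : Fin (N+1)):ℕ)) *
          (Matrix.of fun r j : Fin (N+1) =>
            (Fin.snoc (fun j' : Fin N => φ j' ((i:ℕ) + r)) (ψ k ((i:ℕ) + r)) : Fin (N+1) → ℝ) j) r (Fin.last N) *
          ((Matrix.of fun r j : Fin (N+1) =>
            (Fin.snoc (fun j' : Fin N => φ j' ((i:ℕ) + r)) (ψ k ((i:ℕ) + r)) : Fin (N+1) → ℝ) j).submatrix
              r.succAbove (Fin.last N).succAbove).det
        = Fn (i:ℕ) (r:ℕ) * ψ k ((i:ℕ) + (r:ℕ)) := by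
      intro r
      have hminor : ((Matrix.of fun r j : Fin (N+1) =>
            (Fin.snoc (fun j' : Fin N => φ j' ((i:ℕ) + r)) (ψ k ((i:ℕ) + r)) : Fin (N+1) → ℝ) j).submatrix
              r.succAbove (Fin.last N).succAbove)
          = Matrix.of fun a b : Fin N =>
              φ b ((i:ℕ) + (if (a:ℕ) < (r:ℕ) then (a:ℕ) else (a:ℕ)+1)) := by
        ext a b
        rw [Matrix.submatrix_apply, Fin.succAbove_last, Matrix.of_apply, Fin.snoc_castSucc,
          Matrix.of_apply, ← succAbove_val N r a]
      rw [hminor, Matrix.of_apply, Fin.snoc_last, Fin.val_last, hFn]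
      ring
    rw [Finset.sum_congr rfl (fun r _ => hL r)]
    -- now both sides are sums; filter and biject
    rw [← Finset.sum_filter_of_ne (p := fun r : Fin (N+1) => N ≤ (i:ℕ) + (r:ℕ))
      (fun r _ hne => by
        by_contra hlt
        exact hne (by rw [hψ0 k ((i:ℕ) + (r:ℕ)) (by omega), mul_zero]))]
    rw [← Finset.sum_filter_of_ne
      (p := fun s : Fin (M+1) => (s:ℕ) ≤ (i:ℕ) ∧ (i:ℕ) ≤ N + (s:ℕ))
      (fun s _ hne => by
        by_contra hlt
        exact hne (by
          show E i s * _ = 0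
          rw [hE, Matrix.of_apply, if_neg hlt, zero_mul]))]
    refine Finset.sum_nbij'
      (fun r => (⟨(i:ℕ) + (r:ℕ) - N, by have := r.isLt; have := i.isLt; omega⟩ : Fin (M+1)))
      (fun s => (⟨N + min (s:ℕ) (i:ℕ) - (i:ℕ), by omega⟩ : Fin (N+1)))
      ?_ ?_ ?_ ?_ ?_
    · intro r hr
      simp only [Finset.mem_filter, Finset.mem_univ, true_and, Fin.val_mk] at hr ⊢
      have := r.isLt; omega
    · intro s hs
      simp only [Finset.mem_filter, Finset.mem_univ, true_and, Fin.val_mk] at hs ⊢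
      omega
    · intro r hr
      simp only [Finset.mem_filter, Finset.mem_univ, true_and] at hr
      apply Fin.ext
      simp only [Fin.val_mk]
      have h1 : min ((i:ℕ) + (r:ℕ) - N) (i:ℕ) = (i:ℕ) + (r:ℕ) - N := by
        apply min_eq_left; have := r.isLt; omega
      rw [h1]; omega
    · intro s hs
      simp only [Finset.mem_filter, Finset.mem_univ, true_and] at hs
      apply Fin.ext
      simp only [Fin.val_mk]
      rw [min_eq_left hs.1]
      omega
    · intro r hr
      simp only [Finset.mem_filter, Finset.mem_univ, true_and] at hr
      show Fn (i:ℕ) (r:ℕ) * ψ k ((i:ℕ) + (r:ℕ)) = E i _ * _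
      rw [hE, Matrix.of_apply]
      simp only [Fin.val_mk]
      rw [if_pos (by omega)]
      simp only [Matrix.of_apply, Fin.val_mk]
      have e1 : N + ((i:ℕ) + (r:ℕ) - N) - (i:ℕ) = (r:ℕ) := by have := r.isLt; omega
      have e2 : N + ((i:ℕ) + (r:ℕ) - N) = (i:ℕ) + (r:ℕ) := by omega
      rw [e1, e2]
  have hdetE : E.det = ∏ i : Fin (M+1), ddet N φ (i:ℕ) := by
    have ht : E.BlockTriangular OrderDual.toDual := by
      intro a b hab
      have hab' : a < b := hab
      rw [hE, Matrix.of_apply, if_neg]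
      intro hc
      have : (a:ℕ) < (b:ℕ) := hab'
      omega
    rw [Matrix.det_of_lowerTriangular E ht]
    apply Finset.prod_congr rfl
    intro a _
    rw [hE, Matrix.of_apply, if_pos ⟨le_refl _, by omega⟩, hFn]
    have e : N + (a:ℕ) - (a:ℕ) = N := by omega
    rw [e]
    beta_reduce
    have hone : (-1:ℝ)^(N+N) = 1 := Even.neg_one_pow ⟨N, rfl⟩
    rw [hone, one_mul, ddet]
    congr 1
    ext aa bb
    simp only [Matrix.of_apply, if_pos aa.isLt]
  rw [key, Matrix.det_mul, hdetE]

lemma bigdet_factor (N M : ℕ) (φ : Fin N → ℕ → ℝ) (ψ : Fin M → ℕ → ℝ)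
    (hP : (Matrix.of fun r j : Fin N => φ j (r:ℕ)).det ≠ 0) :
    ∃ coef : Fin M → Fin N → ℝ,
      (∀ k (r : ℕ), r < N → ψ k r - ∑ j, coef k j * φ j r = 0) ∧
      bigdet N M φ ψ = (Matrix.of fun r j : Fin N => φ j (r:ℕ)).det *
        (Matrix.of fun t k : Fin M =>
          ψ k (N + (t:ℕ)) - ∑ j, coef k j * φ j (N + (t:ℕ))).det := by
  set P : Matrix (Fin N) (Fin N) ℝ := Matrix.of fun s j => φ j (s:ℕ) with hPdef
  set B : Matrix (Fin N) (Fin M) ℝ := Matrix.of fun s k => ψ k (s:ℕ) with hBdef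
  have hunit : IsUnit P.det := isUnit_iff_ne_zero.mpr hP
  refine ⟨fun k j => (P⁻¹ * B) j k, ?_, ?_⟩
  · intro k r hr
    have : ∑ j, (P⁻¹ * B) j k * φ j r = (P * (P⁻¹ * B)) ⟨r, hr⟩ k := by
      rw [Matrix.mul_apply]
      apply Finset.sum_congr rfl
      intro j _
      rw [hPdef, Matrix.of_apply, mul_comm]
    rw [this, Matrix.mul_nonsing_inv_cancel_left P B hunit, hBdef]
    simp
  · set Q : Matrix (Fin M) (Fin N) ℝ := Matrix.of fun t j => φ j (N + (t:ℕ)) with hQdef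
    set R₀ : Matrix (Fin M) (Fin M) ℝ := Matrix.of fun t k => ψ k (N + (t:ℕ)) with hRdef
    have hsub : (Matrix.of fun r c : Fin (N+M) =>
        Fin.append (fun j : Fin N => φ j (r : ℕ)) (fun k : Fin M => ψ k (r : ℕ)) c).submatrix
          finSumFinEquiv finSumFinEquiv = Matrix.fromBlocks P B Q R₀ := by
      ext rc cc
      cases rc with
      | inl s =>
        cases cc with
        | inl j => simp [Fin.append_left, hPdef]
        | inr k => simp [Fin.append_right, hBdef]
      | inr t =>
        cases cc with
        | inl j => simp [Fin.append_left, hQdef]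
        | inr k => simp [Fin.append_right, hRdef]
    have hdet1 : bigdet N M φ ψ = (Matrix.fromBlocks P B Q R₀).det := by
      rw [bigdet, ← hsub, Matrix.det_submatrix_equiv_self]
    have hfac : Matrix.fromBlocks P 0 Q (R₀ - Q * (P⁻¹ * B)) *
          Matrix.fromBlocks 1 (P⁻¹ * B) 0 1 = Matrix.fromBlocks P B Q R₀ := by
      rw [Matrix.fromBlocks_multiply]
      simp only [Matrix.mul_one, Matrix.mul_zero, Matrix.zero_mul, add_zero, zero_add,
        Matrix.mul_nonsing_inv_cancel_left P B hunit]
      have hD : Q * (P⁻¹ * B) + (R₀ - Q * (P⁻¹ * B)) = R₀ := by abel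
      rw [hD]
    have hdet2 : (Matrix.fromBlocks (1 : Matrix (Fin N) (Fin N) ℝ) (P⁻¹ * B) 0
        (1 : Matrix (Fin M) (Fin M) ℝ)).det = 1 := by
      rw [Matrix.det_fromBlocks_zero₂₁, Matrix.det_one, Matrix.det_one, mul_one]
    have hR' : R₀ - Q * (P⁻¹ * B) = Matrix.of fun t k : Fin M =>
        ψ k (N + (t:ℕ)) - ∑ j, (P⁻¹ * B) j k * φ j (N + (t:ℕ)) := by
      ext t k
      rw [Matrix.sub_apply, Matrix.of_apply, hRdef, Matrix.of_apply, Matrix.mul_apply]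
      congr 1
      apply Finset.sum_congr rfl
      intro j _
      rw [hQdef, Matrix.of_apply, mul_comm]
    rw [hdet1, ← hfac, Matrix.det_mul, hdet2, mul_one, Matrix.det_fromBlocks_zero₁₂, hR']

lemma core_iff (N M : ℕ) (φ : Fin N → ℕ → ℝ) (ψ : Fin (M+1) → ℕ → ℝ)
    (hd : ∀ i : ℕ, i ≤ M → ddet N φ i ≠ 0) :
    (bigdet N (M+1) φ ψ = 0 ↔
      (Matrix.of fun i k : Fin (M+1) => mdet N φ (ψ k) (i:ℕ)).det = 0) := by
  have h0 : (Matrix.of fun r j : Fin N => φ j (r:ℕ)).det = ddet N φ 0 := by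
    rw [ddet]; congr 1; ext r j; simp
  have hP : (Matrix.of fun r j : Fin N => φ j (r:ℕ)).det ≠ 0 := by
    rw [h0]; exact hd 0 (Nat.zero_le M)
  obtain ⟨coef, hvan, hbig⟩ := bigdet_factor N (M+1) φ ψ hP
  set ψ' : Fin (M+1) → ℕ → ℝ := fun k r => ψ k r - ∑ j, coef k j * φ j r with hψ'
  have hm : ∀ (i : ℕ) k, mdet N φ (ψ k) i = mdet N φ (ψ' k) i :=
    fun i k => (mdet_sub N φ (ψ k) (coef k) i).symm
  have hfac := mdet_factor N M φ ψ' (fun k r hr => hvan k r hr)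
  have hprod : (∏ i : Fin (M+1), ddet N φ (i:ℕ)) ≠ 0 :=
    Finset.prod_ne_zero_iff.mpr fun i _ => hd (i:ℕ) (by omega)
  have hR : (Matrix.of fun t k : Fin (M+1) =>
      ψ k (N + (t:ℕ)) - ∑ j, coef k j * φ j (N + (t:ℕ))).det
      = (Matrix.of fun t k : Fin (M+1) => ψ' k (N + (t:ℕ))).det := rfl
  rw [hbig, hR]
  constructor
  · intro h
    rcases mul_eq_zero.mp h with h | h
    · exact absurd (h0 ▸ h) (hd 0 (Nat.zero_le M))
    · rw [show (Matrix.of fun i k : Fin (M+1) => mdet N φ (ψ k) (i:ℕ))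
          = (Matrix.of fun i k : Fin (M+1) => mdet N φ (ψ' k) (i:ℕ)) from by
            ext i k; exact hm (i:ℕ) k]
      rw [hfac, h, mul_zero]
  · intro h
    rw [show (Matrix.of fun i k : Fin (M+1) => mdet N φ (ψ k) (i:ℕ))
        = (Matrix.of fun i k : Fin (M+1) => mdet N φ (ψ' k) (i:ℕ)) from by
          ext i k; exact hm (i:ℕ) k] at h
    rw [hfac] at h
    rcases mul_eq_zero.mp h with h | h
    · exact absurd h hprod
    · rw [h, mul_zero]


lemma mul_eq_zero_iff_left' {a b : ℝ} (ha : a ≠ 0) : a * b = 0 ↔ b = 0 := by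
  simp [mul_eq_zero, ha]


/-- For fixed indices `i_1 < ⋯ < i_{M+1}` (given by a strictly monotone `ι`), the vanishing of
`W_{N+M+1}^q(φ_1,…,φ_N,∂_q^l φ_{i_1},…,∂_q^l φ_{i_{M+1}})` for all `x ≠ 0` is equivalent to
the vanishing of `W_{M+1}^q(ρ_{i_1},…,ρ_{i_{M+1}})` for all `x ≠ 0`, where
`ρ_i = W_{N+1}^q(φ_1,…,φ_N,∂_q^l φ_i)/W_N^q(φ_1,…,φ_N)`. -/
theorem qWronskian_constraint_iff (q : ℝ) (hq0 : q ≠ 0) (hq1 : q ≠ 1)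
    (N M l : ℕ) (hN : 1 ≤ N) (hl : 1 ≤ l) (φ : Fin N → ℝ → ℝ)
    (hW : ∀ x : ℝ, x ≠ 0 → qWronskian q N φ x ≠ 0)
    (ι : Fin (M + 1) → Fin N) (hι : StrictMono ι) :
    (∀ x : ℝ, x ≠ 0 →
        qWronskian q (N + (M + 1))
          (Fin.append φ (fun k : Fin (M + 1) => (qDeriv q)^[l] (φ (ι k)))) x = 0) ↔
    (∀ x : ℝ, x ≠ 0 →
        qWronskian q (M + 1)
          (fun k : Fin (M + 1) => fun y =>
            qWronskian q (N + 1) (Fin.snoc φ ((qDeriv q)^[l] (φ (ι k)))) y /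
              qWronskian q N φ y) x = 0) := by
  have key : ∀ x : ℝ, x ≠ 0 →
      ((qWronskian q (N + (M + 1))
          (Fin.append φ (fun k : Fin (M + 1) => (qDeriv q)^[l] (φ (ι k)))) x = 0) ↔
       (qWronskian q (M + 1)
          (fun k : Fin (M + 1) => fun y =>
            qWronskian q (N + 1) (Fin.snoc φ ((qDeriv q)^[l] (φ (ι k)))) y /
              qWronskian q N φ y) x = 0)) := by
    intro x hx
    set ψf : Fin (M+1) → ℝ → ℝ := fun k => (qDeriv q)^[l] (φ (ι k)) with hψf
    set φ' : Fin N → ℕ → ℝ := fun j r => φ j (q^r * x) with hφ'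
    set ψ' : Fin (M+1) → ℕ → ℝ := fun k r => ψf k (q^r * x) with hψ'
    have hgrid : ∀ i : ℕ, q^i * x ≠ 0 := fun i => mul_ne_zero (pow_ne_zero i hq0) hx
    have hgrid2 : ∀ i r : ℕ, q^(r:ℕ) * (q^i * x) = q^(i+r) * x := by
      intro i r; rw [pow_add]; ring
    have hdd : ∀ i : ℕ, ddet N φ' i = cas q N φ (q^i * x) := by
      intro i
      rw [ddet, cas]
      congr 1
      ext r j
      simp only [Matrix.of_apply, hφ', hgrid2]
    have hd : ∀ i : ℕ, i ≤ M → ddet N φ' i ≠ 0 := by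
      intro i _
      rw [hdd i]
      exact cas_ne_zero_of_qW q hq0 N φ _ (hgrid i) (hW _ (hgrid i))
    have hbig : cas q (N + (M+1)) (Fin.append φ ψf) x = bigdet N (M+1) φ' ψ' := by
      rw [cas, bigdet]
      congr 1
      ext r c
      simp only [Matrix.of_apply]
      induction c using Fin.addCases with
      | left j => rw [Fin.append_left, Fin.append_left]
      | right k => rw [Fin.append_right, Fin.append_right]
    have hmd : ∀ (i : ℕ) (k : Fin (M+1)),
        mdet N φ' (ψ' k) i = cas q (N+1) (Fin.snoc φ (ψf k)) (q^i * x) := by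
      intro i k
      rw [mdet, cas]
      congr 1
      ext r j
      simp only [Matrix.of_apply]
      induction j using Fin.lastCases with
      | last => rw [Fin.snoc_last, Fin.snoc_last, hgrid2]
      | cast j => rw [Fin.snoc_castSucc, Fin.snoc_castSucc, hgrid2]
    have hL : qWronskian q (N + (M + 1)) (Fin.append φ ψf) x = 0 ↔
        bigdet N (M+1) φ' ψ' = 0 := by
      rw [qWronskian_eq_cas q hq0 _ _ x hx, hbig,
        mul_eq_zero_iff_left' (Tc_prod_ne_zero q hq0 hq1 _ x hx)]
    have hρ : ∀ (i k : Fin (M+1)),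
        qWronskian q (N+1) (Fin.snoc φ (ψf k)) (q^(i:ℕ) * x) / qWronskian q N φ (q^(i:ℕ) * x)
          = ((∏ a : Fin (N+1), Tc q a a (q^(i:ℕ) * x)) /
              ((∏ a : Fin N, Tc q a a (q^(i:ℕ) * x)) * cas q N φ (q^(i:ℕ) * x))) *
            mdet N φ' (ψ' k) (i:ℕ) := by
      intro i k
      rw [hmd, qWronskian_eq_cas q hq0 (N+1) _ _ (hgrid i),
        qWronskian_eq_cas q hq0 N φ _ (hgrid i)]
      ring
    set g : Fin (M+1) → ℝ := fun i => (∏ a : Fin (N+1), Tc q a a (q^(i:ℕ) * x)) /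
        ((∏ a : Fin N, Tc q a a (q^(i:ℕ) * x)) * cas q N φ (q^(i:ℕ) * x)) with hg
    have hg0 : ∀ i : Fin (M+1), g i ≠ 0 := by
      intro i
      exact div_ne_zero (Tc_prod_ne_zero q hq0 hq1 (N+1) _ (hgrid i))
        (mul_ne_zero (Tc_prod_ne_zero q hq0 hq1 N _ (hgrid i))
          (cas_ne_zero_of_qW q hq0 N φ _ (hgrid i) (hW _ (hgrid i))))
    have hR : qWronskian q (M + 1)
        (fun k : Fin (M + 1) => fun y =>
          qWronskian q (N + 1) (Fin.snoc φ (ψf k)) y / qWronskian q N φ y) x = 0 ↔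
        (Matrix.of fun i k : Fin (M+1) => mdet N φ' (ψ' k) (i:ℕ)).det = 0 := by
      rw [qWronskian_eq_cas q hq0 _ _ x hx,
        mul_eq_zero_iff_left' (Tc_prod_ne_zero q hq0 hq1 _ x hx), cas]
      have hmat : (Matrix.of fun i k : Fin (M+1) =>
          (fun k : Fin (M + 1) => fun y =>
            qWronskian q (N + 1) (Fin.snoc φ (ψf k)) y / qWronskian q N φ y) k (q^(i:ℕ) * x))
          = Matrix.of fun i k : Fin (M+1) =>
              g i * (Matrix.of fun i k : Fin (M+1) => mdet N φ' (ψ' k) (i:ℕ)) i k := by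
        ext i k
        exact hρ i k
      rw [hmat, Matrix.det_mul_column g,
        mul_eq_zero_iff_left' (Finset.prod_ne_zero_iff.mpr fun i _ => hg0 i)]
    rw [hL, hR, core_iff N M φ' ψ' hd]
  exact ⟨fun h x hx => (key x hx).mp (h x hx), fun h x hx => (key x hx).mpr (h x hx)⟩
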